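/- Let Jac be the solution space of a Jacobi equation J'' + R(t)J = 0 on a finite-dimensional real inner product space E with each R(t) symmetric. Call c < d conjugate if there exists a nonzero solution J with J(c) = J(d) = 0. If c < d are conjugate, then for every c̄ ≤ c there exists d̄ ∈ [c, d] with c̄ < d̄ such that c̄ and d̄ are conjugate. -/

import Mathlib

open Module RealInnerProductSpace

noncomputable section

/-- `J` is a (normal) Jacobi field for the family of operators `R`, i.e. a `C²`
solution of the Jacobi equation `J'' + R(t) J = 0`. -/
def IsJacobiField {E : Type*} [NormedAddCommGroup E] [NormedSpace ℝ E]
    (R : ℝ → E →ₗ[ℝ] E) (J : ℝ → E) : Prop :=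
  ContDiff ℝ 2 J ∧ ∀ t : ℝ, deriv (deriv J) t = - R t (J t)

/-- `c` and `d` are conjugate for the Jacobi equation given by `R` if some nonzero
solution vanishes at both `c` and `d`. -/
def AreConjugate {E : Type*} [NormedAddCommGroup E] [NormedSpace ℝ E]
    (R : ℝ → E →ₗ[ℝ] E) (c d : ℝ) : Prop :=
  ∃ J : ℝ → E, IsJacobiField R J ∧ J ≠ 0 ∧ J c = 0 ∧ J d = 0

set_option synthInstance.maxHeartbeats 1000000
set_option maxHeartbeats 2000000
set_option linter.unusedSectionVars false

namespace JacobiAux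
open Set

variable {F : Type*} [NormedAddCommGroup F] [NormedSpace ℝ F] [CompleteSpace F]

/-- One Picard–Lindelöf step for a linear ODE: on an interval of length at most
`1 / (2 * (M + 1))` where `‖L t‖ ≤ M`, a solution with arbitrary initial value exists. -/
lemma pl_step (L : ℝ → F →L[ℝ] F) (hL : Continuous L) {M t₁ t₂ : ℝ} (hM : 0 ≤ M)
    (hbd : ∀ t ∈ Icc t₁ t₂, ‖L t‖ ≤ M) (h12 : t₁ ≤ t₂)
    (hlen : t₂ - t₁ ≤ 1 / (2 * (M + 1))) (x₁ : F) :
    ∃ g : ℝ → F, g t₁ = x₁ ∧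
      ∀ t ∈ Icc t₁ t₂, HasDerivWithinAt g (L t (g t)) (Icc t₁ t₂) t := by
  have hpl : IsPicardLindelof (fun t x => L t x) (tmin := t₁) (tmax := t₂) ⟨t₁, le_rfl, h12⟩
      x₁ (‖x₁‖ + 1).toNNReal 0 (M * (2 * ‖x₁‖ + 1)).toNNReal M.toNNReal := by
    constructor
    · intro t ht
      refine (((L t).lipschitz).weaken ?_).lipschitzOnWith
      rw [← NNReal.coe_le_coe, coe_nnnorm, Real.coe_toNNReal _ hM]
      exact hbd t ht
    · intro x _
      exact ((ContinuousLinearMap.apply ℝ F x).continuous.comp hL).continuousOn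
    · intro t ht x hx
      rw [Real.coe_toNNReal _ (by positivity)]
      have h1 : ‖x‖ ≤ 2 * ‖x₁‖ + 1 := by
        have := mem_closedBall_iff_norm.mp hx
        rw [Real.coe_toNNReal _ (by positivity)] at this
        have := norm_le_norm_add_norm_sub' x x₁
        linarith
      calc ‖L t x‖ ≤ ‖L t‖ * ‖x‖ := (L t).le_opNorm x
        _ ≤ M * (2 * ‖x₁‖ + 1) := by
            apply mul_le_mul (hbd t ht) h1 (norm_nonneg x) hM
    · have hmax : max (t₂ - t₁) (t₁ - t₁) = t₂ - t₁ := by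
        rw [sub_self]; exact max_eq_left (by linarith)
      have hC : 0 ≤ M * (2 * ‖x₁‖ + 1) := by positivity
      show ((M * (2 * ‖x₁‖ + 1)).toNNReal : ℝ) * max (t₂ - t₁) (t₁ - t₁) ≤ _
      rw [hmax, Real.coe_toNNReal _ hC, Real.coe_toNNReal _ (by positivity), NNReal.coe_zero,
        sub_zero]
      calc M * (2 * ‖x₁‖ + 1) * (t₂ - t₁) ≤ M * (2 * ‖x₁‖ + 1) * (1 / (2 * (M + 1))) :=
            mul_le_mul_of_nonneg_left hlen hC
        _ ≤ ‖x₁‖ + 1 := by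
            rw [mul_one_div, div_le_iff₀ (by positivity)]
            nlinarith [norm_nonneg x₁]
  exact hpl.exists_eq_forall_mem_Icc_hasDerivWithinAt₀

/-- Glue two solutions of an ODE defined on adjacent closed intervals. -/
lemma glue_ode (v : ℝ → F → F) {a m b : ℝ} (ham : a ≤ m) (hmb : m ≤ b)
    {f₁ f₂ : ℝ → F} (heq : f₁ m = f₂ m)
    (h₁ : ∀ t ∈ Icc a m, HasDerivWithinAt f₁ (v t (f₁ t)) (Icc a m) t)
    (h₂ : ∀ t ∈ Icc m b, HasDerivWithinAt f₂ (v t (f₂ t)) (Icc m b) t) :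
    ∃ f : ℝ → F, (∀ t ∈ Icc a m, f t = f₁ t) ∧ (∀ t ∈ Icc m b, f t = f₂ t) ∧
      ∀ t ∈ Icc a b, HasDerivWithinAt f (v t (f t)) (Icc a b) t := by
  classical
  set f : ℝ → F := fun t => if t ≤ m then f₁ t else f₂ t with hf
  have e₁ : ∀ t ∈ Icc a m, f t = f₁ t := fun t ht => if_pos ht.2
  have e₂ : ∀ t ∈ Icc m b, f t = f₂ t := by
    intro t ht
    by_cases h : t ≤ m
    · have : t = m := le_antisymm h ht.1
      simp only [hf, this, if_pos le_rfl, heq]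
    · exact if_neg h
  refine ⟨f, e₁, e₂, ?_⟩
  intro t ht
  rw [← Icc_union_Icc_eq_Icc ham hmb]
  have A : HasDerivWithinAt f (v t (f t)) (Icc a m) t := by
    by_cases h : t ∈ Icc a m
    · refine ((h₁ t h).congr e₁ (e₁ t h)).congr_deriv ?_
      rw [e₁ t h]
    · exact HasFDerivWithinAt.of_notMem_closure (by rwa [isClosed_Icc.closure_eq])
  have B : HasDerivWithinAt f (v t (f t)) (Icc m b) t := by
    by_cases h : t ∈ Icc m b
    · refine ((h₂ t h).congr e₂ (e₂ t h)).congr_deriv ?_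
      rw [e₂ t h]
    · exact HasFDerivWithinAt.of_notMem_closure (by rwa [isClosed_Icc.closure_eq])
  exact A.union B


lemma hasDerivWithinAt_singleton (f : ℝ → F) (y : F) (t : ℝ) :
    HasDerivWithinAt f y {t} t := by
  rw [HasDerivWithinAt, nhdsWithin_singleton, Filter.prod_pure_pure, hasDerivAtFilter_iff_isLittleO,
    Asymptotics.isLittleO_pure]
  simp

/-- Forward existence of a solution of a linear ODE on a compact interval. -/
lemma exists_sol_fwd (L : ℝ → F →L[ℝ] F) (hL : Continuous L) {a b : ℝ} (hab : a ≤ b)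
    (x₀ : F) :
    ∃ f : ℝ → F, f a = x₀ ∧ ∀ t ∈ Icc a b, HasDerivWithinAt f (L t (f t)) (Icc a b) t := by
  obtain ⟨M₀, hM₀⟩ := (isCompact_Icc (a := a) (b := b)).exists_bound_of_continuousOn
    hL.continuousOn
  set M := max M₀ 0 with hM
  have hMnn : 0 ≤ M := le_max_right _ _
  have hMb : ∀ t ∈ Icc a b, ‖L t‖ ≤ M := fun t ht => (hM₀ t ht).trans (le_max_left _ _)
  set h : ℝ := 1 / (2 * (M + 1)) with hh
  have hhpos : 0 < h := by positivity
  have key : ∀ n : ℕ, ∃ f : ℝ → F, f a = x₀ ∧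
      ∀ t ∈ Icc a (min b (a + n * h)),
        HasDerivWithinAt f (L t (f t)) (Icc a (min b (a + n * h))) t := by
    intro n
    induction n with
    | zero =>
      refine ⟨fun _ => x₀, rfl, ?_⟩
      intro t ht
      simp only [Nat.cast_zero, zero_mul, add_zero, min_eq_right hab] at ht ⊢
      have : t = a := le_antisymm ht.2 ht.1
      subst this
      rw [Icc_self]
      exact hasDerivWithinAt_singleton _ _ _
    | succ n ih =>
      obtain ⟨f, hfa, hf⟩ := ih
      by_cases hc : b ≤ a + n * h
      · have h1 : min b (a + n * h) = b := min_eq_left hc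
        have h2 : min b (a + (n + 1 : ℕ) * h) = b := by
          apply min_eq_left
          push_cast
          nlinarith
        refine ⟨f, hfa, ?_⟩
        rw [h2]; rw [h1] at hf; exact hf
      · push_neg at hc
        set e₁ : ℝ := a + n * h with he₁
        set e₂ : ℝ := min b (e₁ + h) with he₂
        have h1 : min b (a + n * h) = e₁ := min_eq_right hc.le
        have hae₁ : a ≤ e₁ := by
          have : 0 ≤ (n : ℝ) * h := by positivity
          linarith [this]
        have he₁₂ : e₁ ≤ e₂ := le_min hc.le (by linarith)
        have he₂b : e₂ ≤ b := min_le_left _ _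
        have hsub : Icc e₁ e₂ ⊆ Icc a b := Icc_subset_Icc hae₁ he₂b
        obtain ⟨g, hg1, hg⟩ := pl_step L hL hMnn (fun t ht => hMb t (hsub ht)) he₁₂
          (by show e₂ - e₁ ≤ h; have := min_le_right b (e₁ + h); linarith) (f e₁)
        rw [h1] at hf
        obtain ⟨f', glueprops⟩ := glue_ode (fun t x => L t x) hae₁ he₁₂ hg1.symm hf hg
        have h2 : min b (a + (n + 1 : ℕ) * h) = e₂ := by
          rw [he₂, he₁]; congr 1; push_cast; ring
        obtain ⟨hfl, -, hf'⟩ := glueprops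
        refine ⟨f', ?_, ?_⟩
        · rw [hfl a ⟨le_rfl, hae₁⟩, hfa]
        · rw [h2]; exact hf'
  obtain ⟨f, hfa, hf⟩ := key ⌈(b - a) / h⌉₊
  have : min b (a + ⌈(b - a) / h⌉₊ * h) = b := by
    apply min_eq_left
    have h1 : (b - a) / h ≤ ⌈(b - a) / h⌉₊ := Nat.le_ceil _
    rw [div_le_iff₀ hhpos] at h1
    linarith
  rw [this] at hf
  exact ⟨f, hfa, hf⟩


/-- Backward existence, by time reversal. -/
lemma exists_sol_bwd (L : ℝ → F →L[ℝ] F) (hL : Continuous L) {a b : ℝ} (hab : a ≤ b)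
    (x₀ : F) :
    ∃ f : ℝ → F, f b = x₀ ∧ ∀ t ∈ Icc a b, HasDerivWithinAt f (L t (f t)) (Icc a b) t := by
  set L' : ℝ → F →L[ℝ] F := fun s => -L (-s) with hL'
  have hL'c : Continuous L' := (hL.comp continuous_neg).neg
  obtain ⟨g, hgb, hg⟩ := exists_sol_fwd L' hL'c (neg_le_neg hab) x₀
  refine ⟨fun t => g (-t), by simpa using hgb, ?_⟩
  intro t ht
  have hmem : -t ∈ Icc (-b) (-a) := ⟨neg_le_neg ht.2, neg_le_neg ht.1⟩
  have hmaps : MapsTo Neg.neg (Icc a b) (Icc (-b) (-a)) :=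
    fun s hs => ⟨neg_le_neg hs.2, neg_le_neg hs.1⟩
  have := (hg (-t) hmem).scomp (x := t) (h := Neg.neg) (h' := -1)
    ((hasDerivAt_neg t).hasDerivWithinAt) hmaps
  refine this.congr_deriv ?_
  symm
  simp [hL', Function.comp]

/-- Existence of a solution on a compact interval with initial condition inside. -/
lemma exists_sol_Icc (L : ℝ → F →L[ℝ] F) (hL : Continuous L) {a b t₀ : ℝ}
    (ht₀ : t₀ ∈ Icc a b) (x₀ : F) :
    ∃ f : ℝ → F, f t₀ = x₀ ∧ ∀ t ∈ Icc a b, HasDerivWithinAt f (L t (f t)) (Icc a b) t := by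
  obtain ⟨f₁, hf₁, h₁⟩ := exists_sol_bwd L hL ht₀.1 x₀
  obtain ⟨f₂, hf₂, h₂⟩ := exists_sol_fwd L hL ht₀.2 x₀
  obtain ⟨f, hfl, -, hf⟩ := glue_ode (fun t x => L t x) ht₀.1 ht₀.2 (by rw [hf₁, hf₂]) h₁ h₂
  exact ⟨f, by rw [hfl t₀ ⟨ht₀.1, le_rfl⟩, hf₁], hf⟩

/-- Uniqueness for linear ODEs on an open interval. -/
lemma linear_ode_unique_Ioo (L : ℝ → F →L[ℝ] F) (hL : Continuous L) {a b t₀ : ℝ}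
    (ht₀ : t₀ ∈ Ioo a b) {f g : ℝ → F}
    (hf : ∀ t ∈ Ioo a b, HasDerivAt f (L t (f t)) t)
    (hg : ∀ t ∈ Ioo a b, HasDerivAt g (L t (g t)) t)
    (h0 : f t₀ = g t₀) : EqOn f g (Ioo a b) := by
  have hab : a ≤ b := le_of_lt (ht₀.1.trans ht₀.2)
  obtain ⟨M₀, hM₀⟩ := (isCompact_Icc (a := a) (b := b)).exists_bound_of_continuousOn
    hL.continuousOn
  set M := max M₀ 0 with hM
  have hMb : ∀ s ∈ Icc a b, ‖L s‖ ≤ M := fun s hs => (hM₀ s hs).trans (le_max_left _ _)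
  set cl : ℝ → ℝ := fun s => max a (min b s) with hcl
  have hclmem : ∀ s, cl s ∈ Icc a b :=
    fun s => ⟨le_max_left _ _, max_le hab (min_le_left _ _)⟩
  have hcleq : ∀ s ∈ Ioo a b, cl s = s := by
    intro s hs
    rw [hcl]; simp only [min_eq_right hs.2.le, max_eq_right hs.1.le]
  have hlip : ∀ s, LipschitzOnWith M.toNNReal (fun x => L (cl s) x) (univ : Set F) := by
    intro s
    refine (((L (cl s)).lipschitz).weaken ?_).lipschitzOnWith
    rw [← NNReal.coe_le_coe, coe_nnnorm, Real.coe_toNNReal _ (le_max_right _ _)]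
    exact hMb _ (hclmem s)
  exact ODE_solution_unique_of_mem_Ioo (v := fun s x => L (cl s) x)
    (s := fun _ => (univ : Set F)) (fun s _ => hlip s) ht₀
    (fun s hs => ⟨by simpa only [hcleq s hs] using hf s hs, mem_univ _⟩)
    (fun s hs => ⟨by simpa only [hcleq s hs] using hg s hs, mem_univ _⟩) h0

/-- Uniqueness for linear ODEs, globally on `ℝ`. -/
lemma linear_ode_unique (L : ℝ → F →L[ℝ] F) (hL : Continuous L) {f g : ℝ → F}
    (hf : ∀ t, HasDerivAt f (L t (f t)) t) (hg : ∀ t, HasDerivAt g (L t (g t)) t)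
    {t₀ : ℝ} (h0 : f t₀ = g t₀) : f = g := by
  funext t
  have h1 : min t t₀ - 1 < t₀ := by have := min_le_right t t₀; linarith
  have h2 : t₀ < max t t₀ + 1 := by have := le_max_right t t₀; linarith
  have ht : t ∈ Ioo (min t t₀ - 1) (max t t₀ + 1) := by
    constructor
    · have := min_le_left t t₀; linarith
    · have := le_max_left t t₀; linarith
  exact linear_ode_unique_Ioo L hL ⟨h1, h2⟩ (fun s _ => hf s) (fun s _ => hg s) h0 ht

/-- Global existence for linear ODEs on `ℝ`. -/
lemma exists_global_sol (L : ℝ → F →L[ℝ] F) (hL : Continuous L) (t₀ : ℝ) (x₀ : F) :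
    ∃ f : ℝ → F, f t₀ = x₀ ∧ ∀ t, HasDerivAt f (L t (f t)) t := by
  have key : ∀ n : ℕ, ∃ f : ℝ → F, f t₀ = x₀ ∧
      ∀ t ∈ Ioo (t₀ - (n + 1)) (t₀ + (n + 1)), HasDerivAt f (L t (f t)) t := by
    intro n
    have hn : (0 : ℝ) ≤ n := Nat.cast_nonneg n
    obtain ⟨f, hf0, hf⟩ := exists_sol_Icc L hL
      (a := t₀ - (n + 1)) (b := t₀ + (n + 1)) (t₀ := t₀) (by rw [mem_Icc]; constructor <;> linarith) x₀
    refine ⟨f, hf0, fun t ht => ?_⟩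
    exact (hf t (Ioo_subset_Icc_self ht)).hasDerivAt (Icc_mem_nhds ht.1 ht.2)
  choose g hg0 hg using key
  have hmem : ∀ (n : ℕ) (t : ℝ), |t - t₀| ≤ n → t ∈ Ioo (t₀ - (n + 1)) (t₀ + (n + 1)) := by
    intro n t h
    rw [abs_le] at h
    exact ⟨by linarith [h.1], by linarith [h.2]⟩
  have ht₀mem : ∀ n : ℕ, t₀ ∈ Ioo (t₀ - (n + 1 : ℝ)) (t₀ + (n + 1)) := by
    intro n
    have hn : (0 : ℝ) ≤ n := Nat.cast_nonneg n
    exact ⟨by linarith, by linarith⟩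
  have huniq : ∀ m n : ℕ, m ≤ n → ∀ t ∈ Ioo (t₀ - (m + 1)) (t₀ + (m + 1)), g m t = g n t := by
    intro m n hmn t ht
    have hmn' : (m : ℝ) ≤ n := Nat.cast_le.mpr hmn
    have hsub : Ioo (t₀ - (m + 1 : ℝ)) (t₀ + (m + 1)) ⊆ Ioo (t₀ - (n + 1)) (t₀ + (n + 1)) :=
      Ioo_subset_Ioo (by linarith) (by linarith)
    exact linear_ode_unique_Ioo L hL (ht₀mem m) (hg m)
      (fun s hs => hg n s (hsub hs)) ((hg0 m).trans (hg0 n).symm) ht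
  set f : ℝ → F := fun t => g ⌈|t - t₀|⌉₊ t with hfdef
  have hfg : ∀ (n : ℕ) (t : ℝ), t ∈ Ioo (t₀ - (n + 1)) (t₀ + (n + 1)) → f t = g n t := by
    intro n t ht
    set k := ⌈|t - t₀|⌉₊ with hk
    have hkt : t ∈ Ioo (t₀ - (k + 1 : ℝ)) (t₀ + (k + 1)) := hmem k t (Nat.le_ceil _)
    rcases le_total k n with h | h
    · exact huniq k n h t hkt
    · exact (huniq n k h t ht).symm
  have hf0 : f t₀ = x₀ := by
    rw [hfg 0 t₀ (ht₀mem 0), hg0]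
  refine ⟨f, hf0, fun t => ?_⟩
  set n := ⌈|t - t₀|⌉₊ with hn
  have htn : t ∈ Ioo (t₀ - (n + 1 : ℝ)) (t₀ + (n + 1)) := hmem n t (Nat.le_ceil _)
  have heq : f =ᶠ[nhds t] g n :=
    Filter.eventuallyEq_of_mem (Ioo_mem_nhds htn.1 htn.2) (fun s hs => hfg n s hs)
  rw [hfg n t htn]
  exact (hg n t htn).congr_of_eventuallyEq heq


variable {E : Type*} [NormedAddCommGroup E] [InnerProductSpace ℝ E] [FiniteDimensional ℝ E]
  {R : ℝ → E →ₗ[ℝ] E}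

/-- The operator-valued Jacobi equation has a global solution with data `(0, id)` at `c'`. -/
lemma exists_BC (hRcont : Continuous fun p : ℝ × E => R p.1 p.2) (c' : ℝ) :
    ∃ B C : ℝ → E →L[ℝ] E, B c' = 0 ∧ C c' = 1 ∧
      (∀ t, HasDerivAt B (C t) t) ∧
      (∀ t, HasDerivAt C (-((R t).toContinuousLinearMap * B t)) t) := by
  set Rl : ℝ → E →L[ℝ] E := fun t => (R t).toContinuousLinearMap with hRl
  set F' := (E →L[ℝ] E) × (E →L[ℝ] E) with hF'
  set Lop : ℝ → F' →L[ℝ] F' := fun t =>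
    (ContinuousLinearMap.snd ℝ (E →L[ℝ] E) (E →L[ℝ] E)).prod
      (((ContinuousLinearMap.compL ℝ E E E (-(Rl t)))).comp
        (ContinuousLinearMap.fst ℝ (E →L[ℝ] E) (E →L[ℝ] E))) with hLop
  have hRlapp : ∀ (x : E), Continuous fun t => Rl t x := by
    intro x
    exact hRcont.comp (continuous_id.prodMk continuous_const)
  have hLopc : Continuous Lop := by
    rw [continuous_clm_apply]
    rintro ⟨P, Q⟩
    apply Continuous.prodMk
    · exact continuous_const
    · simp only [hLop, ContinuousLinearMap.coe_comp', ContinuousLinearMap.coe_prod]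
      show Continuous fun t => (ContinuousLinearMap.compL ℝ E E E (-(Rl t))) P
      rw [continuous_clm_apply]
      intro y
      show Continuous fun t => (-(Rl t)).comp P y
      simp only [ContinuousLinearMap.comp_apply, ContinuousLinearMap.neg_apply]
      exact (hRlapp (P y)).neg
  obtain ⟨Φ, hΦ0, hΦ⟩ := exists_global_sol Lop hLopc c' (0, 1)
  refine ⟨fun t => (Φ t).1, fun t => (Φ t).2, by show (Φ c').1 = 0; rw [hΦ0],
    by show (Φ c').2 = 1; rw [hΦ0], ?_, ?_⟩
  · intro t
    have := (ContinuousLinearMap.fst ℝ (E →L[ℝ] E) (E →L[ℝ] E)).hasFDerivAt.comp_hasDerivAt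
      t (hΦ t)
    exact this
  · intro t
    have := (ContinuousLinearMap.snd ℝ (E →L[ℝ] E) (E →L[ℝ] E)).hasFDerivAt.comp_hasDerivAt
      t (hΦ t)
    exact this.congr_deriv rfl

/-- Each column of `B` is a Jacobi field. -/
lemma isJacobiField_col (hRcont : Continuous fun p : ℝ × E => R p.1 p.2)
    {B C : ℝ → E →L[ℝ] E}
    (hB : ∀ t, HasDerivAt B (C t) t)
    (hC : ∀ t, HasDerivAt C (-((R t).toContinuousLinearMap * B t)) t) (v : E) :
    IsJacobiField R (fun t => B t v) := by
  have hJ' : ∀ t, HasDerivAt (fun t => B t v) (C t v) t := by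
    intro t
    simpa using (hB t).clm_apply (hasDerivAt_const t v)
  have hJ'' : ∀ t, HasDerivAt (fun t => C t v) (-(R t (B t v))) t := by
    intro t
    have := (hC t).clm_apply (hasDerivAt_const t v)
    simpa using this
  have hBd : Differentiable ℝ B := fun t => (hB t).differentiableAt
  have dJ : deriv (fun t => B t v) = fun t => C t v := funext fun t => (hJ' t).deriv
  constructor
  · have h2 : (2 : WithTop ℕ∞) = 1 + 1 := by norm_num
    rw [h2, contDiff_succ_iff_deriv]
    refine ⟨fun t => (hJ' t).differentiableAt, by norm_num, ?_⟩
    rw [dJ, contDiff_one_iff_deriv]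
    constructor
    · exact fun t => (hJ'' t).differentiableAt
    · have dJ' : deriv (fun t => C t v) = fun t => -(R t (B t v)) :=
        funext fun t => (hJ'' t).deriv
      rw [dJ']
      have : Continuous fun t => R t (B t v) :=
        hRcont.comp (continuous_id.prodMk ((hBd.continuous.clm_apply continuous_const)))
      exact this.neg
  · intro t
    rw [dJ]
    exact (hJ'' t).deriv

lemma conjugate_of_kernel (hRcont : Continuous fun p : ℝ × E => R p.1 p.2)
    {B C : ℝ → E →L[ℝ] E} {c' : ℝ}
    (hBc' : B c' = 0) (hCc' : C c' = 1)
    (hB : ∀ t, HasDerivAt B (C t) t)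
    (hC : ∀ t, HasDerivAt C (-((R t).toContinuousLinearMap * B t)) t)
    {t₀ : ℝ} {v : E} (hv : v ≠ 0) (h0 : B t₀ v = 0) :
    AreConjugate R c' t₀ := by
  refine ⟨fun t => B t v, isJacobiField_col hRcont hB hC v, ?_, by simp [hBc'], h0⟩
  intro hzero
  apply hv
  have hJ' : HasDerivAt (fun t => B t v) (C c' v) c' := by
    simpa using (hB c').clm_apply (hasDerivAt_const c' v)
  rw [hzero] at hJ'
  have : C c' v = 0 := hJ'.unique (hasDerivAt_const _ _)
  rwa [hCc', ContinuousLinearMap.one_apply] at this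

/-- The Wronskian identity: symmetry of `⟪C t x, B t y⟫`. -/
lemma wronskian_symm (hRsym : ∀ t : ℝ, (R t).IsSymmetric)
    {B C : ℝ → E →L[ℝ] E} {c' : ℝ} (hBc' : B c' = 0)
    (hB : ∀ t, HasDerivAt B (C t) t)
    (hC : ∀ t, HasDerivAt C (-((R t).toContinuousLinearMap * B t)) t)
    (x y : E) (t : ℝ) :
    ⟪C t x, B t y⟫ = ⟪B t x, C t y⟫ := by
  set w : ℝ → ℝ := fun t => ⟪C t x, B t y⟫ - ⟪B t x, C t y⟫ with hw
  have hBx : ∀ z : E, ∀ s : ℝ, HasDerivAt (fun s => B s z) (C s z) s := by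
    intro z s
    simpa using (hB s).clm_apply (hasDerivAt_const s z)
  have hCx : ∀ z : E, ∀ s : ℝ, HasDerivAt (fun s => C s z) (-(R s (B s z))) s := by
    intro z s
    simpa using (hC s).clm_apply (hasDerivAt_const s z)
  have hw' : ∀ s, HasDerivAt w 0 s := by
    intro s
    have h1 := (hCx x s).inner ℝ (hBx y s)
    have h2 := (hBx x s).inner ℝ (hCx y s)
    have := h1.sub h2
    refine this.congr_deriv ?_
    symm
    have hsym := hRsym s (B s x) (B s y)
    simp only [inner_neg_left, inner_neg_right]
    linarith [hsym]
  have hconst : ∀ s u : ℝ, w s = w u :=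
    is_const_of_deriv_eq_zero (fun s => (hw' s).differentiableAt) (fun s => (hw' s).deriv)
  have h0 : w c' = 0 := by simp [hw, hBc']
  have hfin : w t = 0 := (hconst t c').trans h0
  have h2 : ⟪C t x, B t y⟫ - ⟪B t x, C t y⟫ = (0:ℝ) := hfin
  linarith [h2]


end JacobiAux

open JacobiAux in
/-- Monotonicity of conjugate points: if `c < d` are conjugate, then for every `c̄ ≤ c`
there exists `d̄ ∈ [c,d]`, `c̄ < d̄`, such that `c̄` and `d̄` are conjugate. -/
theorem conjugate_points_monotone {E : Type*} [NormedAddCommGroup E]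
    [InnerProductSpace ℝ E] [FiniteDimensional ℝ E] (R : ℝ → E →ₗ[ℝ] E)
    (hRcont : Continuous fun p : ℝ × E => R p.1 p.2)
    (hRsym : ∀ t : ℝ, (R t).IsSymmetric)
    (c d : ℝ) (hcd : c < d) (hconj : AreConjugate R c d) :
    ∀ c' : ℝ, c' ≤ c → ∃ d' ∈ Set.Icc c d, c' < d' ∧ AreConjugate R c' d' := by
  intro c' hc'c
  rcases eq_or_lt_of_le hc'c with rfl | hlt
  · exact ⟨d, ⟨hcd.le, le_rfl⟩, hcd, hconj⟩
  by_contra hcon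
  push_neg at hcon
  obtain ⟨B, C, hBc', hCc', hB, hC⟩ := exists_BC hRcont c'
  set Rl : ℝ → E →L[ℝ] E := fun t => (R t).toContinuousLinearMap with hRldef
  -- `B t` is invertible for all `t ∈ [c, d]`
  have hinj : ∀ t ∈ Set.Icc c d, Function.Injective (B t) := by
    intro t ht
    have hker : LinearMap.ker (B t : E →ₗ[ℝ] E) = ⊥ := by
      rw [LinearMap.ker_eq_bot']
      intro v hv
      by_contra hvne
      exact hcon t ht (hlt.trans_le ht.1)
        (conjugate_of_kernel hRcont hBc' hCc' hB hC hvne hv)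
    exact LinearMap.ker_eq_bot.mp hker
  have hunit : ∀ t ∈ Set.Icc c d, IsUnit (B t) := by
    intro t ht
    have hbij : Function.Bijective (B t : E →ₗ[ℝ] E) :=
      ⟨hinj t ht, (LinearMap.injective_iff_surjective).mp (hinj t ht)⟩
    set e := LinearEquiv.ofBijective (B t : E →ₗ[ℝ] E) hbij with he
    refine ⟨⟨B t, LinearMap.toContinuousLinearMap (e.symm : E →ₗ[ℝ] E), ?_, ?_⟩, rfl⟩
    · ext v
      rw [ContinuousLinearMap.mul_apply]
      show B t (e.symm v) = v
      exact e.apply_symm_apply v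
    · ext v
      rw [ContinuousLinearMap.mul_apply]
      show e.symm (B t v) = v
      exact e.symm_apply_apply v
  have hBdiff : Differentiable ℝ B := fun t => (hB t).differentiableAt
  have hBcont : Continuous B := hBdiff.continuous
  have hopen : IsOpen {t : ℝ | IsUnit (B t)} := Units.isOpen.preimage hBcont
  obtain ⟨δ, hδpos, hthick⟩ :=
    isCompact_Icc.exists_thickening_subset_open hopen hunit
  set a₁ : ℝ := c - δ with ha₁
  set b₁ : ℝ := d + δ with hb₁
  have hIccIoo : Set.Icc c d ⊆ Set.Ioo a₁ b₁ := by
    intro t ht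
    exact ⟨by simp only [ha₁]; linarith [ht.1], by simp only [hb₁]; linarith [ht.2]⟩
  have hunit' : ∀ t ∈ Set.Ioo a₁ b₁, IsUnit (B t) := by
    intro t ht
    apply hthick
    rw [Metric.mem_thickening_iff]
    rcases le_total t c with h1 | h1
    · refine ⟨c, ⟨le_rfl, hcd.le⟩, ?_⟩
      rw [Real.dist_eq, abs_lt]
      have := ht.1
      constructor <;> [simp only [ha₁] at this; skip] <;> linarith
    rcases le_total t d with h2 | h2
    · refine ⟨t, ⟨h1, h2⟩, by simpa using hδpos⟩
    · refine ⟨d, ⟨hcd.le, le_rfl⟩, ?_⟩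
      rw [Real.dist_eq, abs_lt]
      have := ht.2
      constructor <;> [skip; simp only [hb₁] at this] <;> linarith
  set Binv : ℝ → E →L[ℝ] E := fun t => Ring.inverse (B t) with hBinvdef
  have hBBinv : ∀ t ∈ Set.Ioo a₁ b₁, B t * Binv t = 1 :=
    fun t ht => Ring.mul_inverse_cancel _ (hunit' t ht)
  have hBinv' : ∀ t ∈ Set.Ioo a₁ b₁, HasDerivAt Binv (-(Binv t * C t * Binv t)) t := by
    intro t ht
    obtain ⟨u, hu⟩ := hunit' t ht
    have h1 : HasFDerivAt Ring.inverse
        (-(ContinuousLinearMap.mulLeftRight ℝ (E →L[ℝ] E) ↑u⁻¹ ↑u⁻¹)) (B t) := by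
      rw [← hu]; exact hasFDerivAt_ringInverse u
    have h2 := h1.comp_hasDerivAt t (hB t)
    have hinvu : Binv t = (↑u⁻¹ : E →L[ℝ] E) := by
      rw [show Binv t = Ring.inverse (B t) from rfl, ← hu, Ring.inverse_unit]
    refine h2.congr_deriv ?_
    symm
    simp [hinvu, ContinuousLinearMap.mulLeftRight_apply]
  set U : ℝ → E →L[ℝ] E := fun t => C t * Binv t with hUdef
  have hU' : ∀ t ∈ Set.Ioo a₁ b₁, HasDerivAt U (-(Rl t) - U t * U t) t := by
    intro t ht
    have h2 := (hC t).mul (hBinv' t ht)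
    refine h2.congr_deriv ?_
    symm
    show -(Rl t) - (C t * Binv t) * (C t * Binv t)
      = -(Rl t * B t) * Binv t + C t * -(Binv t * C t * Binv t)
    have e1 : -(Rl t * B t) * Binv t = -(Rl t * (B t * Binv t)) := by
      rw [neg_mul, mul_assoc]
    rw [e1, hBBinv t ht, mul_one]
    noncomm_ring
  have hUsym : ∀ t ∈ Set.Ioo a₁ b₁, ∀ a b : E, ⟪U t a, b⟫ = ⟪a, U t b⟫ := by
    intro t ht a b
    have happ : ∀ z : E, B t (Binv t z) = z := by
      intro z
      have := congrArg (fun T : E →L[ℝ] E => T z) (hBBinv t ht)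
      simpa [ContinuousLinearMap.mul_apply] using this
    have hw := wronskian_symm hRsym hBc' hB hC (Binv t a) (Binv t b) t
    calc ⟪U t a, b⟫ = ⟪C t (Binv t a), B t (Binv t b)⟫ := by
          rw [happ b]; rfl
      _ = ⟪B t (Binv t a), C t (Binv t b)⟫ := hw
      _ = ⟪a, U t b⟫ := by rw [happ a]; rfl
  -- the given Jacobi field
  obtain ⟨J, ⟨hJc2, hJeq⟩, hJne, hJc, hJd⟩ := hconj
  have hJdiff : Differentiable ℝ J := hJc2.differentiable (by norm_num)
  set J' : ℝ → E := deriv J with hJ'def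
  have hJ'at : ∀ t, HasDerivAt J (J' t) t := fun t => (hJdiff t).hasDerivAt
  have hJ'c2 : ContDiff ℝ 1 J' := by
    have h2 : (2 : WithTop ℕ∞) = 1 + 1 := by norm_num
    rw [h2, contDiff_succ_iff_deriv] at hJc2
    exact hJc2.2.2
  have hJ'diff : Differentiable ℝ J' := hJ'c2.differentiable (by norm_num)
  have hJ'cont : Continuous J' := hJ'diff.continuous
  have hJ''at : ∀ t, HasDerivAt J' (-(R t (J t))) t := fun t => hJeq t ▸ (hJ'diff t).hasDerivAt
  set g : ℝ → ℝ := fun t => ⟪J t, J' t⟫ - ⟪U t (J t), J t⟫ with hgdef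
  have hUJ' : ∀ t ∈ Set.Ioo a₁ b₁,
      HasDerivAt (fun s => U s (J s)) ((-(Rl t) - U t * U t) (J t) + U t (J' t)) t :=
    fun t ht => (hU' t ht).clm_apply (hJ'at t)
  have hg' : ∀ t ∈ Set.Ioo a₁ b₁, HasDerivAt g (‖J' t - U t (J t)‖ ^ 2) t := by
    intro t ht
    have h1 := (hJ'at t).inner ℝ (hJ''at t)
    have h2 := (hUJ' t ht).inner ℝ (hJ'at t)
    have h3 := h1.sub h2
    refine h3.congr_deriv ?_
    symm
    have e1 : (-(Rl t) - U t * U t) (J t) = -(R t (J t)) - U t (U t (J t)) := by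
      simp [ContinuousLinearMap.sub_apply, ContinuousLinearMap.neg_apply,
        ContinuousLinearMap.mul_apply, hRldef]
    rw [e1]
    have s1 : ⟪U t (U t (J t)), J t⟫ = ⟪U t (J t), U t (J t)⟫ :=
      hUsym t ht (U t (J t)) (J t)
    have s2 : ⟪U t (J' t), J t⟫ = ⟪J' t, U t (J t)⟫ := hUsym t ht (J' t) (J t)
    rw [← real_inner_self_eq_norm_sq]
    simp only [inner_sub_left, inner_sub_right, inner_add_left, inner_neg_left,
      inner_neg_right]
    linarith [s1, s2, real_inner_comm (J t) (R t (J t)),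
      real_inner_comm (U t (J t)) (J' t), real_inner_comm (U t (J t)) (J t)]
  have hgc : g c = 0 := by simp [hgdef, hJc]
  have hgd : g d = 0 := by simp [hgdef, hJd]
  have hgmono : MonotoneOn g (Set.Icc c d) := by
    apply monotoneOn_of_deriv_nonneg (convex_Icc c d)
    · exact fun t ht => ((hg' t (hIccIoo ht)).continuousAt).continuousWithinAt
    · intro t ht
      rw [interior_Icc] at ht
      exact ((hg' t (hIccIoo (Set.Ioo_subset_Icc_self ht))).differentiableAt).differentiableWithinAt
    · intro t ht
      rw [interior_Icc] at ht
      rw [(hg' t (hIccIoo (Set.Ioo_subset_Icc_self ht))).deriv]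
      positivity
  have hg0 : ∀ t ∈ Set.Icc c d, g t = 0 := by
    intro t ht
    have h1 := hgmono ht ⟨hcd.le, le_rfl⟩ ht.2
    have h2 := hgmono ⟨le_rfl, hcd.le⟩ ht ht.1
    rw [hgd] at h1
    rw [hgc] at h2
    linarith
  have hJ'U : ∀ t ∈ Set.Ioo c d, J' t = U t (J t) := by
    intro t ht
    have heq0 : g =ᶠ[nhds t] fun _ => 0 :=
      Filter.eventuallyEq_of_mem (Ioo_mem_nhds ht.1 ht.2)
        (fun s hs => hg0 s (Set.Ioo_subset_Icc_self hs))
    have h1 : HasDerivAt g 0 t := (hasDerivAt_const t (0 : ℝ)).congr_of_eventuallyEq heq0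
    have h2 := hg' t (hIccIoo (Set.Ioo_subset_Icc_self ht))
    have h3 := h2.unique h1
    have hnorm : ‖J' t - U t (J t)‖ = 0 := pow_eq_zero_iff two_ne_zero |>.mp h3
    rw [norm_eq_zero, sub_eq_zero] at hnorm
    exact hnorm
  have hcIoo : c ∈ Set.Ioo a₁ b₁ := hIccIoo ⟨le_rfl, hcd.le⟩
  have hφ : ContinuousAt (fun s => J' s - U s (J s)) c :=
    (hJ'cont.continuousAt).sub (hUJ' c hcIoo).continuousAt
  have hnebot : (nhdsWithin c (Set.Ioo c d)).NeBot := by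
    apply mem_closure_iff_nhdsWithin_neBot.mp
    rw [closure_Ioo hcd.ne]
    exact ⟨le_rfl, hcd.le⟩
  have hlim1 : Filter.Tendsto (fun s => J' s - U s (J s)) (nhdsWithin c (Set.Ioo c d))
      (nhds (J' c - U c (J c))) := hφ.continuousWithinAt
  have hlim2 : Filter.Tendsto (fun s => J' s - U s (J s)) (nhdsWithin c (Set.Ioo c d))
      (nhds 0) := by
    refine Filter.Tendsto.congr' ?_ tendsto_const_nhds
    filter_upwards [self_mem_nhdsWithin] with s hs
    rw [hJ'U s hs, sub_self]
  have hJ'c0 : J' c - U c (J c) = 0 := tendsto_nhds_unique hlim1 hlim2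
  have hJ'c : J' c = 0 := by
    have : U c (J c) = 0 := by rw [hJc, map_zero]
    rw [sub_eq_zero] at hJ'c0
    rw [hJ'c0, this]
  -- second-order uniqueness: J ≡ 0, contradiction
  set L2 : ℝ → (E × E) →L[ℝ] (E × E) := fun t =>
    (ContinuousLinearMap.snd ℝ E E).prod ((-(Rl t)).comp (ContinuousLinearMap.fst ℝ E E))
    with hL2def
  have hL2c : Continuous L2 := by
    rw [continuous_clm_apply]
    rintro ⟨x, v⟩
    refine Continuous.prodMk continuous_const ?_
    show Continuous fun t => -(Rl t x)
    exact (hRcont.comp (continuous_id.prodMk continuous_const)).neg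
  set P : ℝ → E × E := fun t => (J t, J' t) with hPdef
  have hP : ∀ t, HasDerivAt P (L2 t (P t)) t := by
    intro t
    have h1 := (hJ'at t).prodMk (hJ''at t)
    exact h1.congr_deriv rfl
  have hzero : ∀ t, HasDerivAt (fun _ : ℝ => (0 : E × E))
      (L2 t ((fun _ : ℝ => (0 : E × E)) t)) t := by
    intro t
    simpa using hasDerivAt_const t (0 : E × E)
  have hPz : P = fun _ => (0 : E × E) :=
    linear_ode_unique L2 hL2c hP hzero (t₀ := c)
      (by show (J c, J' c) = (0 : E × E); rw [hJc, hJ'c]; rfl)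
  apply hJne
  funext t
  have := congrFun hPz t
  exact (Prod.ext_iff.mp this).1
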